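/- Let K be a field complete with respect to a non-trivial absolute value |·|₁, let |·|₀ be the trivial absolute value on K, and let |·|_hyb = max{|·|₁, |·|₀}. Then every multiplicative seminorm |·|_λ on K bounded by |·|_hyb (i.e. |x|_λ ≤ |x|_hyb for all x) is of the form |·|₁^t for a unique t ∈ [0,1]. Consequently the map t ↦ |·|₁^t is a bijection from [0,1] onto the set of multiplicative seminorms on K bounded by |·|_hyb. -/

import Mathlib

open scoped Classical
def IsMultSeminorm {A : Type*} [CommRing A] (f : A → ℝ) : Prop :=
  f 0 = 0 ∧ f 1 = 1 ∧ (∀ x y, f (x * y) = f x * f y) ∧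
    (∀ x y, f (x + y) ≤ f x + f y) ∧ ∀ x, 0 ≤ f x

/-- Real version of `NNReal.rpow_add_le_add_rpow`. -/
lemma aux_rpow_add_le {a b p : ℝ} (ha : 0 ≤ a) (hb : 0 ≤ b) (hp : 0 ≤ p) (hp1 : p ≤ 1) :
    (a + b) ^ p ≤ a ^ p + b ^ p := by
  lift a to NNReal using ha
  lift b to NNReal using hb
  have := NNReal.rpow_add_le_add_rpow a b hp hp1
  exact_mod_cast this

/-- If two positive ratios compare on all rationals, they are equal. -/
lemma aux_ratio_eq {α β γ δ : ℝ} (hα : 0 < α) (hβ : 0 < β) (hγ : 0 < γ) (hδ : 0 < δ)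
    (h1 : ∀ m n : ℕ, 0 < n → (m : ℝ) * γ < n * α → (m : ℝ) * δ ≤ n * β)
    (h2 : ∀ m n : ℕ, 0 < n → (m : ℝ) * α < n * γ → (m : ℝ) * β ≤ n * δ) :
    β / α = δ / γ := by
  have key : ∀ (α' β' γ' δ' : ℝ), 0 < α' → 0 < β' → 0 < γ' → 0 < δ' →
      (∀ m n : ℕ, 0 < n → (m : ℝ) * γ' < n * α' → (m : ℝ) * δ' ≤ n * β') →
      α' * δ' ≤ β' * γ' := by
    intro α' β' γ' δ' hα' hβ' hγ' hδ' h
    by_contra hcon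
    push_neg at hcon
    -- β'/δ' < α'/γ'
    have hlt : β' / δ' < α' / γ' := by
      rw [div_lt_div_iff₀ hδ' hγ']
      nlinarith
    obtain ⟨q, hq1, hq2⟩ := exists_rat_btwn hlt
    have hqpos : 0 < q := by
      have : (0 : ℝ) < q := lt_of_le_of_lt (by positivity) hq1
      exact_mod_cast this
    have hnum : 0 < q.num := Rat.num_pos.mpr hqpos
    set m : ℕ := q.num.toNat with hm
    set n : ℕ := q.den with hn
    have hmZ : (m : ℝ) = (q.num : ℝ) := by
      rw [hm]; exact_mod_cast Int.toNat_of_nonneg hnum.le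
    have hmq : (m : ℝ) / (n : ℝ) = (q : ℝ) := by
      rw [hmZ, hn, Rat.cast_def]
    have hnpos : 0 < n := q.pos
    have hnR : (0 : ℝ) < n := by exact_mod_cast hnpos
    have h3 : (m : ℝ) * γ' < n * α' := by
      have : (m : ℝ) / n < α' / γ' := by rw [hmq]; exact hq2
      rw [div_lt_div_iff₀ hnR hγ'] at this
      linarith
    have h4 := h m n hnpos h3
    have h5 : (q : ℝ) ≤ β' / δ' := by
      rw [← hmq, div_le_div_iff₀ hnR hδ']
      linarith
    linarith
  have k1 := key α β γ δ hα hβ hγ hδ h1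
  have k2 := key γ δ α β hγ hδ hα hβ h2
  rw [div_eq_div_iff hα.ne' hγ.ne']
  nlinarith

/-- over a field `K` complete w.r.t. a non-trivial absolute value `|·|₁`,
every multiplicative seminorm bounded by the hybrid norm `max{|·|₁,|·|₀}` is `|·|₁^t`
for a unique `t ∈ [0,1]`; conversely each `t ∈ [0,1]` gives such a seminorm.
(Hence `t ↦ |·|₁^t` is a bijection onto the set of bounded multiplicative seminorms.) -/
theorem stmt_1 {K : Type*} [Field K] (v : AbsoluteValue K ℝ)
    (hnontrivial : ∃ x : K, x ≠ 0 ∧ v x ≠ 1)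
    (hcomplete : ∀ s : ℕ → K,
      (∀ ε : ℝ, 0 < ε → ∃ N, ∀ m ≥ N, ∀ n ≥ N, v (s m - s n) < ε) →
      ∃ l : K, ∀ ε : ℝ, 0 < ε → ∃ N, ∀ n ≥ N, v (s n - l) < ε) :
    (∀ f : K → ℝ, IsMultSeminorm f →
      (∀ x : K, f x ≤ max (v x) (if x = 0 then 0 else 1)) →
      ∃! t : ℝ, t ∈ Set.Icc (0 : ℝ) 1 ∧ ∀ x : K, x ≠ 0 → f x = v x ^ t) ∧
    (∀ t ∈ Set.Icc (0 : ℝ) 1,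
      IsMultSeminorm (fun x : K => if x = 0 then 0 else v x ^ t) ∧
      ∀ x : K, (if x = 0 then (0 : ℝ) else v x ^ t) ≤
        max (v x) (if x = 0 then 0 else 1)) := by
  -- an element of absolute value > 1
  obtain ⟨c, hc0, hc1⟩ := hnontrivial
  have hvc : 0 < v c := v.pos hc0
  obtain ⟨a, ha⟩ : ∃ a : K, 1 < v a := by
    rcases lt_or_gt_of_ne hc1 with h | h
    · exact ⟨c⁻¹, by rw [map_inv₀]; exact (one_lt_inv₀ hvc).mpr h⟩
    · exact ⟨c, h⟩
  have ha0 : a ≠ 0 := by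
    intro h; rw [h, map_zero] at ha; linarith
  constructor
  · -- Part 1
    intro f hf hbd
    obtain ⟨hf0, hf1, hfm, hfa, hfnn⟩ := hf
    have hfpos : ∀ x : K, x ≠ 0 → 0 < f x := by
      intro x hx
      have h : f x * f x⁻¹ = 1 := by rw [← hfm, mul_inv_cancel₀ hx, hf1]
      rcases (hfnn x).lt_or_eq with h' | h'
      · exact h'
      · exfalso; rw [← h', zero_mul] at h; exact zero_ne_one h
    have hfinv : ∀ x : K, x ≠ 0 → f x⁻¹ = (f x)⁻¹ := by
      intro x hx
      exact eq_inv_of_mul_eq_one_left (by rw [← hfm, inv_mul_cancel₀ hx, hf1])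
    have hfpow : ∀ (x : K) (n : ℕ), f (x ^ n) = f x ^ n := by
      intro x n
      induction n with
      | zero => simpa using hf1
      | succ k ih => rw [pow_succ, pow_succ, hfm, ih]
    have hball : ∀ x : K, v x ≤ 1 → f x ≤ 1 := by
      intro x hx
      rcases eq_or_ne x 0 with rfl | hx0
      · rw [hf0]; exact zero_le_one
      · have := hbd x
        rw [if_neg hx0] at this
        exact this.trans (max_le hx le_rfl)
    have hv1 : ∀ x : K, x ≠ 0 → v x = 1 → f x = 1 := by
      intro x hx0 hx
      have h1' : f x ≤ 1 := hball x hx.le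
      have h2' : f x⁻¹ ≤ 1 := hball x⁻¹ (by rw [map_inv₀, hx]; norm_num)
      rw [hfinv x hx0] at h2'
      have hpos := hfpos x hx0
      have : 1 ≤ f x := by
        by_contra hcon
        push_neg at hcon
        have := (one_lt_inv₀ hpos).mpr hcon
        linarith
      linarith
    -- v x > 1 implies f x > 1, given some b with f b > 1
    have hgt : ∀ b : K, 1 < f b → ∀ x : K, 1 < v x → 1 < f x := by
      intro b hb x hx
      by_contra hcon
      push_neg at hcon
      have hx0 : x ≠ 0 := by
        intro h; rw [h, map_zero] at hx; linarith
      obtain ⟨n, hn⟩ := pow_unbounded_of_one_lt (v b) hx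
      have hz : v (b * (x ^ n)⁻¹) < 1 := by
        rw [map_mul, map_inv₀, map_pow, ← div_eq_mul_inv, div_lt_one (by positivity)]
        exact hn
      have hfz : f (b * (x ^ n)⁻¹) ≤ 1 := hball _ hz.le
      have hxn0 : x ^ n ≠ 0 := pow_ne_zero n hx0
      have hfxn : f x ^ n ≤ 1 := pow_le_one₀ (hfnn x) hcon
      have hfxnpos : 0 < f x ^ n := pow_pos (hfpos x hx0) n
      rw [hfm, hfinv _ hxn0, hfpow, ← div_eq_mul_inv, div_le_one hfxnpos] at hfz
      linarith
    -- key comparison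
    have hkey : ∀ x y : K, 1 < v x → 1 < v y → ∀ m n : ℕ, 0 < n →
        (m : ℝ) * Real.log (v y) < n * Real.log (v x) →
        (m : ℝ) * Real.log (f y) ≤ n * Real.log (f x) := by
      intro x y hx hy m n hn hmn
      have hx0 : x ≠ 0 := by intro h; rw [h, map_zero] at hx; linarith
      have hy0 : y ≠ 0 := by intro h; rw [h, map_zero] at hy; linarith
      have hvx : 0 < v x := v.pos hx0
      have hvy : 0 < v y := v.pos hy0
      have hvlt : v y ^ m < v x ^ n := by
        have h1' : Real.log (v y ^ m) < Real.log (v x ^ n) := by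
          rw [Real.log_pow, Real.log_pow]; exact_mod_cast hmn
        have := Real.exp_lt_exp.mpr h1'
        rwa [Real.exp_log (by positivity), Real.exp_log (by positivity)] at this
      have hz : v (y ^ m * (x ^ n)⁻¹) < 1 := by
        rw [map_mul, map_inv₀, map_pow, map_pow, ← div_eq_mul_inv, div_lt_one (by positivity)]
        exact hvlt
      have hfz : f (y ^ m * (x ^ n)⁻¹) ≤ 1 := hball _ hz.le
      have hxn0 : x ^ n ≠ 0 := pow_ne_zero n hx0
      have hfxpos : 0 < f x ^ n := pow_pos (hfpos x hx0) n
      rw [hfm, hfinv _ hxn0, hfpow, hfpow, ← div_eq_mul_inv, div_le_one hfxpos] at hfz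
      have := Real.log_le_log (pow_pos (hfpos y hy0) m) hfz
      rwa [Real.log_pow, Real.log_pow] at this
    by_cases htriv : ∀ x : K, x ≠ 0 → f x = 1
    · -- f is trivial : t = 0
      refine ⟨0, ⟨⟨le_refl 0, zero_le_one⟩, ?_⟩, ?_⟩
      · intro x hx
        rw [Real.rpow_zero]
        exact htriv x hx
      · rintro t' ⟨⟨ht0', ht1'⟩, hP⟩
        have h := hP a ha0
        rw [htriv a ha0] at h
        have hlog : Real.log (v a ^ t') = 0 := by rw [← h, Real.log_one]
        rw [Real.log_rpow (by linarith : (0:ℝ) < v a)] at hlog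
        have : Real.log (v a) ≠ 0 := ne_of_gt (Real.log_pos ha)
        rcases mul_eq_zero.mp hlog with h' | h'
        · exact h'
        · exact absurd h' this
    · -- f nontrivial
      push_neg at htriv
      obtain ⟨y, hy0, hyne⟩ := htriv
      obtain ⟨b, hvb, hfb⟩ : ∃ b : K, 1 < v b ∧ 1 < f b := by
        rcases lt_or_gt_of_ne hyne with h | h
        · refine ⟨y⁻¹, ?_, ?_⟩
          · rw [map_inv₀]
            refine (one_lt_inv₀ (v.pos hy0)).mpr ?_
            by_contra hc
            push_neg at hc
            rcases eq_or_lt_of_le hc with h' | h'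
            · exact absurd (hv1 y hy0 h'.symm) (by linarith)
            · have := hgt y⁻¹ (by rw [hfinv y hy0]; exact (one_lt_inv₀ (hfpos y hy0)).mpr h) y h'
              linarith
          · rw [hfinv y hy0]; exact (one_lt_inv₀ (hfpos y hy0)).mpr h
        · refine ⟨y, ?_, h⟩
          by_contra hc
          push_neg at hc
          have := hball y hc
          linarith
      have hgt' : ∀ x : K, 1 < v x → 1 < f x := hgt b hfb
      have hvbpos : (0:ℝ) < v b := by linarith
      have hlvb : 0 < Real.log (v b) := Real.log_pos hvb
      have hlfb : 0 < Real.log (f b) := Real.log_pos hfb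
      set t : ℝ := Real.log (f b) / Real.log (v b) with hts
      have ht0 : 0 < t := div_pos hlfb hlvb
      have ht1 : t ≤ 1 := by
        have hfb_le : f b ≤ v b := by
          have := hbd b
          have hb0 : b ≠ 0 := by intro h; rw [h, map_zero] at hvb; linarith
          rw [if_neg hb0] at this
          exact this.trans (max_le le_rfl hvb.le)
        have := Real.log_le_log (by linarith) hfb_le
        rw [hts, div_le_one hlvb]
        exact this
      -- main formula for v x > 1
      have hmain : ∀ x : K, 1 < v x → f x = v x ^ t := by
        intro x hx
        have hx0 : x ≠ 0 := by intro h; rw [h, map_zero] at hx; linarith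
        have hfx : 1 < f x := hgt' x hx
        have hlvx : 0 < Real.log (v x) := Real.log_pos hx
        have hlfx : 0 < Real.log (f x) := Real.log_pos hfx
        have hratio : Real.log (f x) / Real.log (v x) = Real.log (f b) / Real.log (v b) := by
          apply aux_ratio_eq hlvx hlfx hlvb hlfb
          · intro m n hn h; exact hkey x b hx hvb m n hn h
          · intro m n hn h; exact hkey b x hvb hx m n hn h
        have hlog : Real.log (f x) = t * Real.log (v x) := by
          rw [hts, ← hratio]
          field_simp
        rw [Real.rpow_def_of_pos (by linarith : (0:ℝ) < v x), ← Real.exp_log (by linarith : (0:ℝ) < f x), hlog]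
        ring_nf
      refine ⟨t, ⟨⟨ht0.le, ht1⟩, ?_⟩, ?_⟩
      · intro x hx0
        rcases lt_trichotomy (v x) 1 with h | h | h
        · have hvx : 0 < v x := v.pos hx0
          have hinv : 1 < v x⁻¹ := by rw [map_inv₀]; exact (one_lt_inv₀ hvx).mpr h
          have := hmain x⁻¹ hinv
          rw [hfinv x hx0, map_inv₀, Real.inv_rpow hvx.le] at this
          have h2 := congrArg Inv.inv this
          rwa [inv_inv, inv_inv] at h2
        · rw [hv1 x hx0 h, h, Real.one_rpow]
        · exact hmain x h
      · rintro t' ⟨⟨ht0', ht1'⟩, hP⟩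
        have hb0 : b ≠ 0 := by intro h; rw [h, map_zero] at hvb; linarith
        have h1' := hP b hb0
        have h2' := hmain b hvb
        have : v b ^ t' = v b ^ t := by rw [← h1', h2']
        have hlogeq : t' * Real.log (v b) = t * Real.log (v b) := by
          have := congrArg Real.log this
          rwa [Real.log_rpow hvbpos, Real.log_rpow hvbpos] at this
        have := mul_right_cancel₀ (ne_of_gt hlvb) hlogeq
        exact this
  · -- Part 2
    intro t ⟨ht0, ht1⟩
    refine ⟨⟨?_, ?_, ?_, ?_, ?_⟩, ?_⟩
    · simp
    · simp [Real.one_rpow]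
    · intro x y
      rcases eq_or_ne x 0 with rfl | hx0
      · simp
      rcases eq_or_ne y 0 with rfl | hy0
      · simp
      have hxy : x * y ≠ 0 := mul_ne_zero hx0 hy0
      simp only [if_neg hx0, if_neg hy0, if_neg hxy]
      rw [map_mul, Real.mul_rpow (v.nonneg x) (v.nonneg y)]
    · intro x y
      rcases eq_or_ne x 0 with rfl | hx0
      · simp
      rcases eq_or_ne y 0 with rfl | hy0
      · simp
      have hnnx : 0 ≤ v x ^ t := Real.rpow_nonneg (v.nonneg x) t
      have hnny : 0 ≤ v y ^ t := Real.rpow_nonneg (v.nonneg y) t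
      rcases eq_or_ne (x + y) 0 with h | h
      · simp only [h, if_pos rfl, if_neg hx0, if_neg hy0]
        positivity
      · simp only [if_neg h, if_neg hx0, if_neg hy0]
        calc v (x + y) ^ t ≤ (v x + v y) ^ t :=
              Real.rpow_le_rpow (v.nonneg _) (v.add_le x y) ht0
          _ ≤ v x ^ t + v y ^ t := aux_rpow_add_le (v.nonneg x) (v.nonneg y) ht0 ht1
    · intro x
      rcases eq_or_ne x 0 with rfl | hx0
      · simp
      · simp only [if_neg hx0]
        exact Real.rpow_nonneg (v.nonneg x) t
    · intro x
      rcases eq_or_ne x 0 with rfl | hx0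
      · simp
      · simp only [if_neg hx0]
        rcases le_or_gt (v x) 1 with h | h
        · exact le_max_of_le_right (Real.rpow_le_one (v.nonneg x) h ht0)
        · refine le_max_of_le_left ?_
          calc v x ^ t ≤ v x ^ (1:ℝ) :=
                Real.rpow_le_rpow_of_exponent_le h.le ht1
            _ = v x := Real.rpow_one _
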